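/- Let K: ℝ^d → ℝ be C² with ‖∇²K‖ ≤ C_K. Let ρ₁, ρ₂, ρ̄₁, ρ̄₂ be probability densities with finite second moments, with ρ̄₁, ρ̄₂ absolutely continuous. Then |∬ (ρ₁(x) − ρ̄₁(x))(ρ₂(y) − ρ̄₂(y)) K(x−y) dx dy| ≤ (C_K/2)[W(ρ₁, ρ̄₁)² + W(ρ₂, ρ̄₂)²]. -/

import Mathlib

open MeasureTheory

section Aux
variable {E : Type*} [NormedAddCommGroup E] [NormedSpace ℝ E]

lemma grad_lip {K : E → ℝ} {CK : ℝ} (hK2 : ContDiff ℝ 2 K)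
    (hHess : ∀ z, ‖iteratedFDeriv ℝ 2 K z‖ ≤ CK) (x y : E) :
    ‖fderiv ℝ K y - fderiv ℝ K x‖ ≤ CK * ‖y - x‖ := by
  have hd1 : ContDiff ℝ 1 (fderiv ℝ K) := hK2.fderiv_right (by norm_num)
  have hbound : ∀ z : E, ‖fderiv ℝ (fderiv ℝ K) z‖ ≤ CK := by
    intro z
    have hCK : (0:ℝ) ≤ CK := le_trans (norm_nonneg _) (hHess z)
    refine ContinuousLinearMap.opNorm_le_bound _ hCK fun a => ?_
    refine ContinuousLinearMap.opNorm_le_bound _ (by positivity) fun b => ?_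
    have h1 : fderiv ℝ (fderiv ℝ K) z a b = iteratedFDeriv ℝ 2 K z ![a, b] := by
      rw [iteratedFDeriv_two_apply]; simp
    have h2 := (iteratedFDeriv ℝ 2 K z).le_opNorm ![a, b]
    have h3 : (∏ i, ‖(![a, b]) i‖) = ‖a‖ * ‖b‖ := by
      simp [Fin.prod_univ_two]
    rw [h3] at h2
    calc ‖fderiv ℝ (fderiv ℝ K) z a b‖ = ‖iteratedFDeriv ℝ 2 K z ![a, b]‖ := by rw [h1]
      _ ≤ ‖iteratedFDeriv ℝ 2 K z‖ * (‖a‖ * ‖b‖) := h2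
      _ ≤ CK * (‖a‖ * ‖b‖) := by
          have := hHess z
          nlinarith [norm_nonneg a, norm_nonneg b, mul_nonneg (norm_nonneg a) (norm_nonneg b)]
      _ = CK * ‖a‖ * ‖b‖ := by ring
  exact Convex.norm_image_sub_le_of_norm_fderiv_le
    (fun w _ => hd1.differentiable (by norm_num) w)
    (fun w _ => hbound w) convex_univ (Set.mem_univ x) (Set.mem_univ y)

lemma bracket_bound {K : E → ℝ} {CK : ℝ} (hK2 : ContDiff ℝ 2 K)
    (hHess : ∀ z, ‖iteratedFDeriv ℝ 2 K z‖ ≤ CK) (z a b : E) :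
    |K (z + a - b) - K (z + a) - K (z - b) + K z| ≤ CK * ‖a‖ * ‖b‖ := by
  have hKd : Differentiable ℝ K := hK2.differentiable (by norm_num)
  set h : E → ℝ := fun w => K (w - b) - K w with hh
  have hder : ∀ w : E, HasFDerivAt h (fderiv ℝ K (w - b) - fderiv ℝ K w) w := by
    intro w
    have h1 : HasFDerivAt (fun w : E => K (w - b)) (fderiv ℝ K (w - b)) w := by
      have := (hKd (w - b)).hasFDerivAt.comp w ((hasFDerivAt_id w).sub_const b)
      simpa [Function.comp_def] using this
    exact h1.sub (hKd w).hasFDerivAt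
  have hb : ∀ w : E, ‖fderiv ℝ K (w - b) - fderiv ℝ K w‖ ≤ CK * ‖b‖ := by
    intro w
    have := grad_lip hK2 hHess w (w - b)
    simpa using this
  have hmvt := Convex.norm_image_sub_le_of_norm_hasFDerivWithin_le
    (f' := fun w => fderiv ℝ K (w - b) - fderiv ℝ K w)
    (fun w _ => (hder w).hasFDerivWithinAt) (fun w _ => hb w) convex_univ
    (Set.mem_univ z) (Set.mem_univ (z + a))
  have he : h (z + a) - h z = K (z + a - b) - K (z + a) - K (z - b) + K z := by
    simp only [hh]; ring
  rw [Real.norm_eq_abs, he] at hmvt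
  calc |K (z + a - b) - K (z + a) - K (z - b) + K z| ≤ CK * ‖b‖ * ‖z + a - z‖ := hmvt
    _ = CK * ‖a‖ * ‖b‖ := by rw [show z + a - z = a by abel]; ring

lemma quad_growth {K : E → ℝ} {CK : ℝ} (hK2 : ContDiff ℝ 2 K)
    (hHess : ∀ z, ‖iteratedFDeriv ℝ 2 K z‖ ≤ CK) :
    ∃ C₀ : ℝ, 0 ≤ C₀ ∧ ∀ w : E, |K w| ≤ C₀ * (1 + ‖w‖ ^ 2) := by
  have hCK : (0:ℝ) ≤ CK := le_trans (norm_nonneg _) (hHess 0)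
  have hKd : Differentiable ℝ K := hK2.differentiable (by norm_num)
  set D0 := ‖fderiv ℝ K 0‖ with hD0
  refine ⟨|K 0| + D0 + CK, by positivity, fun w => ?_⟩
  have hseg : |K w - K 0| ≤ (D0 + CK * ‖w‖) * ‖w - 0‖ := by
    have hbd : ∀ x ∈ Metric.closedBall (0:E) ‖w‖, ‖fderiv ℝ K x‖ ≤ D0 + CK * ‖w‖ := by
      intro x hx
      have h1 : ‖fderiv ℝ K x - fderiv ℝ K 0‖ ≤ CK * ‖x - 0‖ := grad_lip hK2 hHess 0 x
      have h2 : ‖x‖ ≤ ‖w‖ := by simpa using Metric.mem_closedBall.mp hx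
      have h3 : ‖fderiv ℝ K x‖ ≤ D0 + CK * ‖x‖ := by
        have := norm_sub_norm_le (fderiv ℝ K x) (fderiv ℝ K 0)
        simp only [sub_zero] at h1
        linarith
      nlinarith [norm_nonneg x]
    have hw : w ∈ Metric.closedBall (0:E) ‖w‖ := by
      simp [Metric.mem_closedBall, dist_eq_norm]
    have := Convex.norm_image_sub_le_of_norm_fderiv_le
      (fun x _ => hKd x) hbd (convex_closedBall (0:E) ‖w‖)
      (Metric.mem_closedBall_self (norm_nonneg w)) hw
    simpa [Real.norm_eq_abs] using this
  rw [sub_zero] at hseg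
  have h4 : |K w| ≤ |K 0| + (D0 + CK * ‖w‖) * ‖w‖ := by
    have := abs_sub_abs_le_abs_sub (K w) (K 0)
    linarith
  nlinarith [norm_nonneg w, sq_nonneg (‖w‖ - 1), abs_nonneg (K 0), hD0 ▸ norm_nonneg (fderiv ℝ K 0)]

end Aux

set_option maxHeartbeats 2000000

/-- Bound on the cross interaction term:
`|∬ (ρ₁−ρ̄₁)(x)(ρ₂−ρ̄₂)(y) K(x−y) dx dy| ≤ (C_K/2)(W(ρ₁,ρ̄₁)² + W(ρ₂,ρ̄₂)²)`,
with `ρ_j = μ_j`, `ρ̄_j = ν_j`, and the squared Wasserstein distances realized by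
transport maps `T_j` pushing `ν_j` forward to `μ_j`. -/
theorem stmt14 (d : ℕ) (hd : 0 < d)
    (K : EuclideanSpace ℝ (Fin d) → ℝ) (CK : ℝ)
    (hK2 : ContDiff ℝ 2 K)
    (hHess : ∀ z, ‖iteratedFDeriv ℝ 2 K z‖ ≤ CK)
    (μ₁ μ₂ ν₁ ν₂ : Measure (EuclideanSpace ℝ (Fin d)))
    [IsProbabilityMeasure μ₁] [IsProbabilityMeasure μ₂]
    [IsProbabilityMeasure ν₁] [IsProbabilityMeasure ν₂]
    (hν₁ac : ν₁ ≪ volume) (hν₂ac : ν₂ ≪ volume)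
    (hμ₁m2 : Integrable (fun x => ‖x‖ ^ 2) μ₁) (hμ₂m2 : Integrable (fun x => ‖x‖ ^ 2) μ₂)
    (hν₁m2 : Integrable (fun x => ‖x‖ ^ 2) ν₁) (hν₂m2 : Integrable (fun x => ‖x‖ ^ 2) ν₂)
    (T₁ T₂ : EuclideanSpace ℝ (Fin d) → EuclideanSpace ℝ (Fin d))
    (hT₁m : Measurable T₁) (hT₂m : Measurable T₂)
    (hpush₁ : ν₁.map T₁ = μ₁) (hpush₂ : ν₂.map T₂ = μ₂) :
    |(∫ x, ∫ y, K (x - y) ∂μ₂ ∂μ₁) - (∫ x, ∫ y, K (x - y) ∂ν₂ ∂μ₁)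
        - (∫ x, ∫ y, K (x - y) ∂μ₂ ∂ν₁) + ∫ x, ∫ y, K (x - y) ∂ν₂ ∂ν₁| ≤
      CK / 2 * ((∫ x, ‖T₁ x - x‖ ^ 2 ∂ν₁) + ∫ x, ‖T₂ x - x‖ ^ 2 ∂ν₂) := by
  have hCK : (0:ℝ) ≤ CK := le_trans (norm_nonneg _) (hHess 0)
  have Kc : Continuous K := hK2.continuous
  obtain ⟨C₀, hC₀, hKg⟩ := quad_growth hK2 hHess
  -- second moments of pushed-forward measures
  have hT₁sq : Integrable (fun u => ‖T₁ u‖ ^ 2) ν₁ := by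
    rw [← hpush₁] at hμ₁m2
    have := (integrable_map_measure
      ((continuous_norm.pow 2).aestronglyMeasurable) hT₁m.aemeasurable).mp hμ₁m2
    simpa [Function.comp_def, Pi.pow_apply] using this
  have hT₂sq : Integrable (fun v => ‖T₂ v‖ ^ 2) ν₂ := by
    rw [← hpush₂] at hμ₂m2
    have := (integrable_map_measure
      ((continuous_norm.pow 2).aestronglyMeasurable) hT₂m.aemeasurable).mp hμ₂m2
    simpa [Function.comp_def, Pi.pow_apply] using this
  -- generic integrability facts
  have hInner : ∀ (S R : EuclideanSpace ℝ (Fin d) → EuclideanSpace ℝ (Fin d)), Measurable R → Integrable (fun v => ‖R v‖ ^ 2) ν₂ →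
      ∀ u : EuclideanSpace ℝ (Fin d), Integrable (fun v => K (S u - R v)) ν₂ := by
    intro S R hR hRsq u
    refine Integrable.mono' (g := fun v => C₀ * (1 + 2 * ‖S u‖ ^ 2) + 2 * C₀ * ‖R v‖ ^ 2)
      ((integrable_const _).add (hRsq.const_mul _))
      ((Kc.measurable.comp (measurable_const.sub hR)).aestronglyMeasurable)
      (Filter.Eventually.of_forall fun v => ?_)
    have h1 := hKg (S u - R v)
    have h2 : ‖S u - R v‖ ^ 2 ≤ 2 * ‖S u‖ ^ 2 + 2 * ‖R v‖ ^ 2 := by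
      have h0 := norm_sub_le (S u) (R v)
      nlinarith [sq_nonneg (‖S u‖ - ‖R v‖), norm_nonneg (S u - R v),
        mul_self_le_mul_self (norm_nonneg (S u - R v)) h0]
    simp only [Real.norm_eq_abs]
    nlinarith [mul_le_mul_of_nonneg_left h2 hC₀]
  have hMeasInt : ∀ (S R : EuclideanSpace ℝ (Fin d) → EuclideanSpace ℝ (Fin d)), Measurable S → Measurable R →
      StronglyMeasurable (fun u : EuclideanSpace ℝ (Fin d) => ∫ v, K (S u - R v) ∂ν₂) := by
    intro S R hS hR
    exact (Kc.measurable.comp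
      ((hS.comp measurable_fst).sub (hR.comp measurable_snd))).stronglyMeasurable.integral_prod_right'
  have hOuter : ∀ (S R : EuclideanSpace ℝ (Fin d) → EuclideanSpace ℝ (Fin d)), Measurable S → Measurable R →
      Integrable (fun u => ‖S u‖ ^ 2) ν₁ → Integrable (fun v => ‖R v‖ ^ 2) ν₂ →
      Integrable (fun u => ∫ v, K (S u - R v) ∂ν₂) ν₁ := by
    intro S R hS hR hSsq hRsq
    set MR := ∫ v, ‖R v‖ ^ 2 ∂ν₂ with hMR
    refine Integrable.mono'
      (g := fun u => (2 * C₀) * ‖S u‖ ^ 2 + (C₀ + 2 * C₀ * MR))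
      ((hSsq.const_mul _).add (integrable_const _))
      (hMeasInt S R hS hR).aestronglyMeasurable
      (Filter.Eventually.of_forall fun u => ?_)
    calc ‖∫ v, K (S u - R v) ∂ν₂‖ ≤ ∫ v, ‖K (S u - R v)‖ ∂ν₂ :=
          norm_integral_le_integral_norm _
      _ ≤ ∫ v, (C₀ * (1 + 2 * ‖S u‖ ^ 2) + 2 * C₀ * ‖R v‖ ^ 2) ∂ν₂ := by
          refine integral_mono_of_nonneg (Filter.Eventually.of_forall fun v => norm_nonneg _)
            ((integrable_const _).add (hRsq.const_mul _))
            (Filter.Eventually.of_forall fun v => ?_)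
          have h1 := hKg (S u - R v)
          have h2 : ‖S u - R v‖ ^ 2 ≤ 2 * ‖S u‖ ^ 2 + 2 * ‖R v‖ ^ 2 := by
            have h0 := norm_sub_le (S u) (R v)
            nlinarith [sq_nonneg (‖S u‖ - ‖R v‖), norm_nonneg (S u - R v),
              mul_self_le_mul_self (norm_nonneg (S u - R v)) h0]
          simp only [Real.norm_eq_abs]
          nlinarith [mul_le_mul_of_nonneg_left h2 hC₀]
      _ = (2 * C₀) * ‖S u‖ ^ 2 + (C₀ + 2 * C₀ * MR) := by
          rw [integral_add (integrable_const _) (hRsq.const_mul _), integral_const,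
            integral_const_mul, probReal_univ]
          simp only [ENNReal.toReal_one, one_smul, smul_eq_mul]
          ring
  -- pushforward rewrites
  have hmapInner : ∀ x : EuclideanSpace ℝ (Fin d), ∫ y, K (x - y) ∂μ₂ = ∫ v, K (x - T₂ v) ∂ν₂ := by
    intro x
    rw [← hpush₂]
    exact integral_map (f := fun y => K (x - y)) hT₂m.aemeasurable
      (Continuous.aestronglyMeasurable (by fun_prop))
  have hmapOuter : ∀ (R : EuclideanSpace ℝ (Fin d) → EuclideanSpace ℝ (Fin d)), Measurable R →
      ∫ x, ∫ v, K (x - R v) ∂ν₂ ∂μ₁ = ∫ u, ∫ v, K (T₁ u - R v) ∂ν₂ ∂ν₁ := by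
    intro R hR
    rw [← hpush₁]
    exact integral_map (f := fun x => ∫ v, K (x - R v) ∂ν₂) hT₁m.aemeasurable
      (by simpa only [id_eq] using (hMeasInt id R measurable_id hR).aestronglyMeasurable)
  have e1 : ∫ x, ∫ y, K (x - y) ∂μ₂ ∂μ₁ = ∫ u, ∫ v, K (T₁ u - T₂ v) ∂ν₂ ∂ν₁ := by
    rw [show (fun x : EuclideanSpace ℝ (Fin d) => ∫ y, K (x - y) ∂μ₂) = fun x => ∫ v, K (x - T₂ v) ∂ν₂ from
      funext hmapInner]
    exact hmapOuter T₂ hT₂m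
  have e2 : ∫ x, ∫ y, K (x - y) ∂ν₂ ∂μ₁ = ∫ u, ∫ v, K (T₁ u - v) ∂ν₂ ∂ν₁ := by
    simpa only [id_eq] using hmapOuter id measurable_id
  have e3 : ∫ x, ∫ y, K (x - y) ∂μ₂ ∂ν₁ = ∫ u, ∫ v, K (u - T₂ v) ∂ν₂ ∂ν₁ := by
    rw [show (fun x : EuclideanSpace ℝ (Fin d) => ∫ y, K (x - y) ∂μ₂) = fun x => ∫ v, K (x - T₂ v) ∂ν₂ from
      funext hmapInner]
  rw [e1, e2, e3]
  -- integrability of the four pieces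
  have hidsq₁ : Integrable (fun u : EuclideanSpace ℝ (Fin d) => ‖id u‖ ^ 2) ν₁ := hν₁m2
  have hidsq₂ : Integrable (fun v : EuclideanSpace ℝ (Fin d) => ‖id v‖ ^ 2) ν₂ := hν₂m2
  have h1i := hInner T₁ T₂ hT₂m hT₂sq
  have h2i := hInner T₁ id measurable_id hidsq₂
  have h3i := hInner id T₂ hT₂m hT₂sq
  have h4i := hInner id id measurable_id hidsq₂
  have h1o := hOuter T₁ T₂ hT₁m hT₂m hT₁sq hT₂sq
  have h2o := hOuter T₁ id hT₁m measurable_id hT₁sq hidsq₂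
  have h3o := hOuter id T₂ measurable_id hT₂m hidsq₁ hT₂sq
  have h4o := hOuter id id measurable_id measurable_id hidsq₁ hidsq₂
  simp only [id_eq] at h1i h2i h3i h4i h1o h2o h3o h4o
  -- combine into a single iterated integral
  have inner_eq : ∀ u : EuclideanSpace ℝ (Fin d),
      (∫ v, (K (T₁ u - T₂ v) - K (T₁ u - v) - K (u - T₂ v) + K (u - v)) ∂ν₂) =
      (∫ v, K (T₁ u - T₂ v) ∂ν₂) - (∫ v, K (T₁ u - v) ∂ν₂)
        - (∫ v, K (u - T₂ v) ∂ν₂) + ∫ v, K (u - v) ∂ν₂ := by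
    intro u
    have hA2 : Integrable (fun v => K (T₁ u - T₂ v) - K (T₁ u - v)) ν₂ := (h1i u).sub (h2i u)
    have hA3 : Integrable (fun v => K (T₁ u - T₂ v) - K (T₁ u - v) - K (u - T₂ v)) ν₂ :=
      hA2.sub (h3i u)
    rw [integral_add hA3 (h4i u), integral_sub hA2 (h3i u), integral_sub (h1i u) (h2i u)]
  have outer_eq :
      (∫ u, (∫ v, (K (T₁ u - T₂ v) - K (T₁ u - v) - K (u - T₂ v) + K (u - v)) ∂ν₂) ∂ν₁) =
      (∫ u, ∫ v, K (T₁ u - T₂ v) ∂ν₂ ∂ν₁) - (∫ u, ∫ v, K (T₁ u - v) ∂ν₂ ∂ν₁)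
        - (∫ u, ∫ v, K (u - T₂ v) ∂ν₂ ∂ν₁) + ∫ u, ∫ v, K (u - v) ∂ν₂ ∂ν₁ := by
    simp only [inner_eq]
    have hB2 : Integrable (fun u => (∫ v, K (T₁ u - T₂ v) ∂ν₂) - ∫ v, K (T₁ u - v) ∂ν₂) ν₁ :=
      h1o.sub h2o
    have hB3 : Integrable (fun u => (∫ v, K (T₁ u - T₂ v) ∂ν₂) - (∫ v, K (T₁ u - v) ∂ν₂)
        - ∫ v, K (u - T₂ v) ∂ν₂) ν₁ := hB2.sub h3o
    rw [integral_add hB3 h4o, integral_sub hB2 h3o, integral_sub h1o h2o]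
  rw [← outer_eq]
  -- the final bound
  have hdiff₁ : Integrable (fun u => ‖T₁ u - u‖ ^ 2) ν₁ := by
    refine Integrable.mono' (g := fun u => 2 * ‖T₁ u‖ ^ 2 + 2 * ‖u‖ ^ 2)
      ((hT₁sq.const_mul _).add (hν₁m2.const_mul _))
      (((hT₁m.sub measurable_id).norm.pow_const 2).aestronglyMeasurable)
      (Filter.Eventually.of_forall fun u => ?_)
    have h0 := norm_sub_le (T₁ u) u
    simp only [Real.norm_eq_abs, abs_of_nonneg (sq_nonneg ‖T₁ u - u‖)]
    nlinarith [sq_nonneg (‖T₁ u‖ - ‖u‖), norm_nonneg (T₁ u - u),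
      mul_self_le_mul_self (norm_nonneg (T₁ u - u)) h0]
  have hdiff₂ : Integrable (fun v => ‖T₂ v - v‖ ^ 2) ν₂ := by
    refine Integrable.mono' (g := fun v => 2 * ‖T₂ v‖ ^ 2 + 2 * ‖v‖ ^ 2)
      ((hT₂sq.const_mul _).add (hν₂m2.const_mul _))
      (((hT₂m.sub measurable_id).norm.pow_const 2).aestronglyMeasurable)
      (Filter.Eventually.of_forall fun v => ?_)
    have h0 := norm_sub_le (T₂ v) v
    simp only [Real.norm_eq_abs, abs_of_nonneg (sq_nonneg ‖T₂ v - v‖)]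
    nlinarith [sq_nonneg (‖T₂ v‖ - ‖v‖), norm_nonneg (T₂ v - v),
      mul_self_le_mul_self (norm_nonneg (T₂ v - v)) h0]
  set Mb := ∫ v, ‖T₂ v - v‖ ^ 2 ∂ν₂ with hMb
  have hMb0 : 0 ≤ Mb := integral_nonneg fun v => by positivity
  have hFbound : ∀ u v : EuclideanSpace ℝ (Fin d),
      |K (T₁ u - T₂ v) - K (T₁ u - v) - K (u - T₂ v) + K (u - v)| ≤
        CK / 2 * (‖T₁ u - u‖ ^ 2 + ‖T₂ v - v‖ ^ 2) := by
    intro u v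
    have hb := bracket_bound hK2 hHess (u - v) (T₁ u - u) (T₂ v - v)
    rw [show u - v + (T₁ u - u) - (T₂ v - v) = T₁ u - T₂ v by abel,
      show u - v + (T₁ u - u) = T₁ u - v by abel,
      show u - v - (T₂ v - v) = u - T₂ v by abel] at hb
    nlinarith [sq_nonneg (‖T₁ u - u‖ - ‖T₂ v - v‖), norm_nonneg (T₁ u - u),
      norm_nonneg (T₂ v - v), mul_nonneg (norm_nonneg (T₁ u - u)) (norm_nonneg (T₂ v - v))]
  have hgbound : ∀ u : EuclideanSpace ℝ (Fin d),
      |∫ v, (K (T₁ u - T₂ v) - K (T₁ u - v) - K (u - T₂ v) + K (u - v)) ∂ν₂| ≤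
        CK / 2 * ‖T₁ u - u‖ ^ 2 + CK / 2 * Mb := by
    intro u
    calc |∫ v, (K (T₁ u - T₂ v) - K (T₁ u - v) - K (u - T₂ v) + K (u - v)) ∂ν₂|
        ≤ ∫ v, |K (T₁ u - T₂ v) - K (T₁ u - v) - K (u - T₂ v) + K (u - v)| ∂ν₂ := by
          simpa [Real.norm_eq_abs] using norm_integral_le_integral_norm
            (fun v => K (T₁ u - T₂ v) - K (T₁ u - v) - K (u - T₂ v) + K (u - v)) (μ := ν₂)
      _ ≤ ∫ v, (CK / 2 * ‖T₁ u - u‖ ^ 2 + CK / 2 * ‖T₂ v - v‖ ^ 2) ∂ν₂ := by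
          refine integral_mono_of_nonneg (Filter.Eventually.of_forall fun v => abs_nonneg _)
            ((integrable_const _).add (hdiff₂.const_mul _))
            (Filter.Eventually.of_forall fun v => ?_)
          have := hFbound u v
          linarith
      _ = CK / 2 * ‖T₁ u - u‖ ^ 2 + CK / 2 * Mb := by
          rw [integral_add (integrable_const _) (hdiff₂.const_mul _), integral_const,
            integral_const_mul, probReal_univ]
          simp [hMb]
  calc |∫ u, (∫ v, (K (T₁ u - T₂ v) - K (T₁ u - v) - K (u - T₂ v) + K (u - v)) ∂ν₂) ∂ν₁|
      ≤ ∫ u, |∫ v, (K (T₁ u - T₂ v) - K (T₁ u - v) - K (u - T₂ v) + K (u - v)) ∂ν₂| ∂ν₁ := by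
        simpa [Real.norm_eq_abs] using norm_integral_le_integral_norm
          (fun u => ∫ v, (K (T₁ u - T₂ v) - K (T₁ u - v) - K (u - T₂ v) + K (u - v)) ∂ν₂)
          (μ := ν₁)
    _ ≤ ∫ u, (CK / 2 * ‖T₁ u - u‖ ^ 2 + CK / 2 * Mb) ∂ν₁ := by
        refine integral_mono_of_nonneg (Filter.Eventually.of_forall fun u => abs_nonneg _)
          ((hdiff₁.const_mul _).add (integrable_const _))
          (Filter.Eventually.of_forall fun u => hgbound u)
    _ = CK / 2 * ((∫ x, ‖T₁ x - x‖ ^ 2 ∂ν₁) + ∫ x, ‖T₂ x - x‖ ^ 2 ∂ν₂) := by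
        rw [integral_add (hdiff₁.const_mul _) (integrable_const _), integral_const,
          integral_const_mul, probReal_univ]
        simp only [ENNReal.toReal_one, one_smul, smul_eq_mul]
        ring
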